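/- arXiv:2605.14457 — 4 statements merged into one kernel-verified Lean document; each statement's English description precedes it below -/
import Mathlib

section
/- The function N ↦ g(N) + ln Φ(N) on (c, ∞) tends to +∞ as N → c⁺ and tends to −∞ as N → ∞; moreover it is strictly decreasing on (c, ∞), so it has exactly one zero in (c, ∞). -/
/-- With `g` the derivative of the baseline log-accuracy and `Φ`
an insight accessibility function (continuous on `[0, ∞)`, valued in `(0, 1]`,
`Φ 0 = 1`, strictly decreasing on `[0, ∞)`, `Φ x → 0` as `x → ∞`), the map
`N ↦ g N + ln (Φ N)` on `(c, ∞)` tends to `+∞` as `N → c⁺`, tends to `-∞` as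
`N → ∞`, is strictly decreasing on `(c, ∞)`, and has exactly one zero in
`(c, ∞)`. -/
theorem stmt_7 (σ T M c : ℝ)
    (hσ0 : 0 < σ) (hσ1 : σ < 1) (hT : 0 < T) (hM : 0 < M)
    (hc : c = T / M)
    (L g : ℝ → ℝ)
    (hL : ∀ N : ℝ, L N = N * Real.log ((1 - σ) * (1 - c / N)))
    (hg : ∀ N : ℝ, g N = deriv L N)
    (Φ : ℝ → ℝ)
    (hΦcont : ContinuousOn Φ (Set.Ici 0))
    (hΦpos : ∀ x : ℝ, 0 ≤ x → 0 < Φ x)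
    (hΦle : ∀ x : ℝ, 0 ≤ x → Φ x ≤ 1)
    (hΦ0 : Φ 0 = 1)
    (hΦanti : StrictAntiOn Φ (Set.Ici 0))
    (hΦlim : Filter.Tendsto Φ Filter.atTop (nhds 0)) :
    Filter.Tendsto (fun N => g N + Real.log (Φ N))
      (nhdsWithin c (Set.Ioi c)) Filter.atTop ∧
    Filter.Tendsto (fun N => g N + Real.log (Φ N)) Filter.atTop Filter.atBot ∧
    StrictAntiOn (fun N => g N + Real.log (Φ N)) (Set.Ioi c) ∧
    (∃! N : ℝ, N ∈ Set.Ioi c ∧ g N + Real.log (Φ N) = 0) := by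
  classical
  open Filter Topology Set Real in
  have hc0 : 0 < c := hc ▸ div_pos hT hM
  have hσ : (0:ℝ) < 1 - σ := by linarith
  set F : ℝ → ℝ :=
    fun x => Real.log (1 - σ) + Real.log (x - c) - Real.log x + c * (x - c)⁻¹ with hF
  -- derivative of L
  have hLder : ∀ N : ℝ, c < N → HasDerivAt L (F N) N := by
    intro N hN
    have hN0 : (0:ℝ) < N := hc0.trans hN
    have hNc : (0:ℝ) < N - c := sub_pos.2 hN
    have hu0 : (0:ℝ) < 1 - c / N := by
      rw [sub_pos]; exact (div_lt_one hN0).2 hN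
    have hux : (0:ℝ) < (1 - σ) * (1 - c / N) := mul_pos hσ hu0
    have h1 : HasDerivAt (fun x : ℝ => (1 - σ) * (1 - c / x)) ((1 - σ) * (c / N ^ 2)) N := by
      have h := ((((hasDerivAt_id N).inv hN0.ne').const_mul c).const_sub 1).const_mul (1 - σ)
      refine h.congr_deriv ?_
      simp only [id_eq]; ring
    have h3 : HasDerivAt (fun x : ℝ => x * Real.log ((1 - σ) * (1 - c / x)))
        (1 * Real.log ((1 - σ) * (1 - c / N)) +
          N * (((1 - σ) * (c / N ^ 2)) / ((1 - σ) * (1 - c / N)))) N :=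
      (hasDerivAt_id N).mul (h1.log hux.ne')
    have hLe : L = fun x : ℝ => x * Real.log ((1 - σ) * (1 - c / x)) := funext hL
    rw [hLe]
    convert h3 using 1
    have e1 : (1 : ℝ) - c / N = (N - c) / N := by field_simp
    rw [hF, e1, Real.log_mul hσ.ne' (div_pos hNc hN0).ne', Real.log_div hNc.ne' hN0.ne']
    field_simp
    ring
  have hgF : ∀ N ∈ Set.Ioi c, g N = F N := fun N hN => (hg N).trans (hLder N hN).deriv
  -- derivative of F
  have hFder : ∀ N : ℝ, c < N → HasDerivAt F (-(c ^ 2 / (N * (N - c) ^ 2))) N := by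
    intro N hN
    have hN0 : (0:ℝ) < N := hc0.trans hN
    have hNc : (0:ℝ) < N - c := sub_pos.2 hN
    have h1 : HasDerivAt (fun x : ℝ => Real.log (x - c)) ((N - c)⁻¹) N := by
      simpa using ((hasDerivAt_id N).sub_const c).log hNc.ne'
    have h2 : HasDerivAt Real.log (N⁻¹) N := Real.hasDerivAt_log hN0.ne'
    have h3 : HasDerivAt (fun x : ℝ => c * (x - c)⁻¹) (c * (-1 / (N - c) ^ 2)) N := by
      simpa using (((hasDerivAt_id N).sub_const c).inv hNc.ne').const_mul c
    have h := ((h1.const_add (Real.log (1 - σ))).sub h2).add h3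
    refine h.congr_deriv ?_
    field_simp
    ring
  have hFcontOn : ContinuousOn F (Set.Ioi c) := fun x hx =>
    (hFder x hx).differentiableAt.continuousAt.continuousWithinAt
  -- F is strictly decreasing on (c, ∞)
  have hFanti : StrictAntiOn F (Set.Ioi c) := by
    apply strictAntiOn_of_deriv_neg (convex_Ioi c) hFcontOn
    intro x hx
    rw [interior_Ioi] at hx
    rw [(hFder x hx).deriv]
    have hx0 : (0:ℝ) < x := hc0.trans hx
    have hxc : (0:ℝ) < x - c := sub_pos.2 hx
    have : 0 < c ^ 2 / (x * (x - c) ^ 2) := by positivity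
    linarith
  -- log ∘ Φ is (strictly) decreasing on (c, ∞)
  have hlogΦanti : ∀ a ∈ Set.Ioi c, ∀ b ∈ Set.Ioi c, a < b →
      Real.log (Φ b) < Real.log (Φ a) := by
    intro a ha b hb hab
    have ha0 : (0:ℝ) ≤ a := (hc0.trans ha).le
    have hb0 : (0:ℝ) ≤ b := (hc0.trans hb).le
    exact Real.log_lt_log (hΦpos b hb0) (hΦanti ha0 hb0 hab)
  -- strict antitonicity of the full map
  have hanti : StrictAntiOn (fun N => g N + Real.log (Φ N)) (Set.Ioi c) := by
    intro a ha b hb hab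
    have h1 := hFanti ha hb hab
    have h2 := hlogΦanti a ha b hb hab
    simp only [hgF a ha, hgF b hb]
    linarith
  -- tendsto at c from the right
  have heq : ∀ᶠ N in nhdsWithin c (Set.Ioi c),
      F N + Real.log (Φ N) = g N + Real.log (Φ N) := by
    filter_upwards [self_mem_nhdsWithin] with N hN
    rw [hgF N hN]
  have htop : Filter.Tendsto (fun N => g N + Real.log (Φ N))
      (nhdsWithin c (Set.Ioi c)) Filter.atTop := by
    have hsub : Filter.Tendsto (fun N : ℝ => N - c) (nhdsWithin c (Set.Ioi c))
        (nhdsWithin 0 (Set.Ioi 0)) := by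
      apply tendsto_nhdsWithin_of_tendsto_nhds_of_eventually_within
      · have : Filter.Tendsto (fun N : ℝ => N - c) (nhds c) (nhds (c - c)) :=
          (continuous_id.sub continuous_const).tendsto c
        simpa using this.mono_left nhdsWithin_le_nhds
      · filter_upwards [self_mem_nhdsWithin] with x hx
        exact sub_pos.2 (show c < x from hx)
    have hA0 : Filter.Tendsto (fun t : ℝ => Real.log t + c * t⁻¹)
        (nhdsWithin 0 (Set.Ioi 0)) Filter.atTop := by
      have h1 : Filter.Tendsto (fun t : ℝ => (Real.log t * t + c) * t⁻¹)
          (nhdsWithin 0 (Set.Ioi 0)) Filter.atTop := by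
        refine Filter.Tendsto.pos_mul_atTop hc0 ?_ tendsto_inv_nhdsGT_zero
        have h2 : Filter.Tendsto (fun t : ℝ => Real.log t * t)
            (nhdsWithin 0 (Set.Ioi 0)) (nhds 0) := by
          simpa using tendsto_log_mul_rpow_nhdsGT_zero (zero_lt_one)
        simpa using h2.add (tendsto_const_nhds (x := c))
      refine h1.congr' ?_
      filter_upwards [self_mem_nhdsWithin] with t ht
      have ht0 : t ≠ 0 := ne_of_gt ht
      field_simp
    have hA : Filter.Tendsto (fun N : ℝ => Real.log (N - c) + c * (N - c)⁻¹)
        (nhdsWithin c (Set.Ioi c)) Filter.atTop := hA0.comp hsub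
    have hlogN : Filter.Tendsto (fun N : ℝ => Real.log N) (nhdsWithin c (Set.Ioi c))
        (nhds (Real.log c)) :=
      ((Real.continuousAt_log hc0.ne').tendsto).comp
        (nhdsWithin_le_nhds (s := Set.Ioi c))
    have hΦc : Filter.Tendsto Φ (nhdsWithin c (Set.Ioi c)) (nhds (Φ c)) :=
      ((hΦcont c hc0.le).tendsto).mono_left
        (nhdsWithin_mono c (fun x hx => (hc0.trans hx).le))
    have hlogΦ : Filter.Tendsto (fun N => Real.log (Φ N)) (nhdsWithin c (Set.Ioi c))
        (nhds (Real.log (Φ c))) :=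
      ((Real.continuousAt_log (hΦpos c hc0.le).ne').tendsto).comp hΦc
    have hB : Filter.Tendsto (fun N : ℝ => Real.log (1 - σ) - Real.log N + Real.log (Φ N))
        (nhdsWithin c (Set.Ioi c))
        (nhds (Real.log (1 - σ) - Real.log c + Real.log (Φ c))) :=
      (tendsto_const_nhds.sub hlogN).add hlogΦ
    have hcomb := hA.atTop_add hB
    have hcomb2 : Filter.Tendsto (fun N : ℝ => F N + Real.log (Φ N))
        (nhdsWithin c (Set.Ioi c)) Filter.atTop := by
      refine hcomb.congr (fun N => ?_)
      simp only [hF]; ring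
    exact hcomb2.congr' heq
  -- tendsto at infinity
  have hbot : Filter.Tendsto (fun N => g N + Real.log (Φ N)) Filter.atTop Filter.atBot := by
    have h1 : Filter.Tendsto (fun N : ℝ => Real.log (N - c) - Real.log N)
        Filter.atTop (nhds 0) := by
      have hq : Filter.Tendsto (fun N : ℝ => (N - c) / N) Filter.atTop (nhds 1) := by
        have hd : Filter.Tendsto (fun N : ℝ => c / N) Filter.atTop (nhds 0) :=
          tendsto_const_nhds.div_atTop tendsto_id
        have := (tendsto_const_nhds (x := (1:ℝ))).sub hd
        rw [sub_zero] at this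
        refine this.congr' ?_
        filter_upwards [Filter.eventually_gt_atTop (0:ℝ)] with N hN
        field_simp
      have hlog1 : Filter.Tendsto (fun N : ℝ => Real.log ((N - c) / N))
          Filter.atTop (nhds 0) := by
        have := ((Real.continuousAt_log one_ne_zero).tendsto).comp hq
        simpa [Function.comp_def] using this
      refine hlog1.congr' ?_
      filter_upwards [Filter.eventually_gt_atTop c] with N hN
      have hN0 : (0:ℝ) < N := hc0.trans hN
      have hNc : (0:ℝ) < N - c := sub_pos.2 hN
      rw [Real.log_div hNc.ne' hN0.ne']
    have h2 : Filter.Tendsto (fun N : ℝ => c * (N - c)⁻¹) Filter.atTop (nhds 0) := by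
      have hd : Filter.Tendsto (fun N : ℝ => N - c) Filter.atTop Filter.atTop :=
        tendsto_atTop_add_const_right _ (-c) Filter.tendsto_id |>.congr (fun x => by simp [sub_eq_add_neg])
      have := (tendsto_const_nhds (x := c)).mul hd.inv_tendsto_atTop
      simpa using this
    have h3 : Filter.Tendsto (fun N : ℝ => Real.log (Φ N)) Filter.atTop Filter.atBot := by
      have hΦ' : Filter.Tendsto Φ Filter.atTop (nhdsWithin 0 (Set.Ioi 0)) := by
        apply tendsto_nhdsWithin_of_tendsto_nhds_of_eventually_within _ hΦlim
        filter_upwards [Filter.eventually_ge_atTop (0:ℝ)] with x hx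
        exact hΦpos x hx
      exact Real.tendsto_log_nhdsGT_zero.comp hΦ'
    have hfin : Filter.Tendsto
        (fun N : ℝ => Real.log (1 - σ) + (Real.log (N - c) - Real.log N) + c * (N - c)⁻¹)
        Filter.atTop (nhds (Real.log (1 - σ) + 0 + 0)) :=
      ((tendsto_const_nhds.add h1).add h2)
    have hcomb := hfin.add_atBot h3
    have hcomb2 : Filter.Tendsto (fun N : ℝ => F N + Real.log (Φ N))
        Filter.atTop Filter.atBot := by
      refine hcomb.congr (fun N => ?_)
      simp only [hF]; ring
    refine hcomb2.congr' ?_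
    filter_upwards [Filter.eventually_gt_atTop c] with N hN
    rw [hgF N hN]
  refine ⟨htop, hbot, hanti, ?_⟩
  -- existence of a point with positive value
  obtain ⟨a, ha0, hac⟩ :=
    ((htop.eventually (Filter.eventually_gt_atTop (0:ℝ))).and self_mem_nhdsWithin).exists
  obtain ⟨b, hb0, hab⟩ :=
    ((hbot.eventually (Filter.eventually_lt_atBot (0:ℝ))).and
      (Filter.eventually_gt_atTop a)).exists
  have hcb : c < b := hac.trans hab
  have hcont : ContinuousOn (fun N => g N + Real.log (Φ N)) (Set.Icc a b) := by
    have hsub : Set.Icc a b ⊆ Set.Ioi c := fun x hx => lt_of_lt_of_le hac hx.1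
    have hΦ' : ContinuousOn Φ (Set.Ioi c) :=
      hΦcont.mono (fun x hx => (hc0.trans hx).le)
    have hlogΦcont : ContinuousOn (fun N => Real.log (Φ N)) (Set.Ioi c) :=
      hΦ'.log (fun x hx => (hΦpos x (hc0.trans hx).le).ne')
    have : ContinuousOn (fun N => F N + Real.log (Φ N)) (Set.Icc a b) :=
      ((hFcontOn.add hlogΦcont).mono hsub)
    refine this.congr (fun x hx => ?_)
    rw [hgF x (hsub hx)]
  have hmem : (0:ℝ) ∈ Set.Ioo ((fun N => g N + Real.log (Φ N)) b)
      ((fun N => g N + Real.log (Φ N)) a) := ⟨hb0, ha0⟩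
  obtain ⟨x, hx, hx0⟩ := intermediate_value_Ioo' hab.le hcont hmem
  refine ⟨x, ⟨hac.trans hx.1, hx0⟩, ?_⟩
  rintro y ⟨hy, hy0⟩
  exact hanti.injOn hy (hac.trans hx.1) (hy0.trans hx0.symm)
end

section
/- (Lemma 2, real-world CoT part.) The real-world CoT log-accuracy F_Φ(N) := L(N) + ∫_1^N ln Φ(x) dx attains its maximum over (c, ∞) at a unique point N_Φ* ∈ (c, ∞), and N_Φ* is characterized as the unique solution in (c, ∞) of the optimality condition g(N) = −ln Φ(N). -/
open Real Filter Set Topology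

lemma aux_hasDerivAt_L (σ c N : ℝ) (hσ1 : σ < 1) (hc0 : 0 < c) (hN : c < N) :
    HasDerivAt (fun N : ℝ => N * Real.log ((1 - σ) * (1 - c / N)))
      (Real.log ((1 - σ) * (1 - c / N)) + c / (N - c)) N := by
  have hN0 : 0 < N := hc0.trans hN
  have hσ : 0 < 1 - σ := by linarith
  have h1 : 0 < 1 - c / N := by
    have : c / N < 1 := (div_lt_one hN0).mpr hN
    linarith
  have hu : HasDerivAt (fun x : ℝ => (1 - σ) * (1 - c / x)) ((1 - σ) * (c / N ^ 2)) N := by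
    have hinv : HasDerivAt (fun x : ℝ => c / x) (c * -(N ^ 2)⁻¹) N :=
      (hasDerivAt_inv hN0.ne').const_mul c
    have := (hinv.const_sub 1).const_mul (1 - σ)
    convert this using 1
    all_goals try rfl
    field_simp
  have hupos : 0 < (1 - σ) * (1 - c / N) := mul_pos hσ h1
  have hlog : HasDerivAt (fun x : ℝ => Real.log ((1 - σ) * (1 - c / x)))
      ((1 - σ) * (c / N ^ 2) / ((1 - σ) * (1 - c / N))) N := hu.log hupos.ne'
  have := (hasDerivAt_id N).mul hlog
  convert this using 1
  all_goals try rfl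
  have hNc : N - c ≠ 0 := sub_ne_zero.mpr hN.ne'
  simp only [id_eq, one_mul]
  congr 1
  field_simp

lemma aux_hasDerivAt_G (σ c N : ℝ) (hσ1 : σ < 1) (hc0 : 0 < c) (hN : c < N) :
    HasDerivAt (fun N : ℝ => Real.log ((1 - σ) * (1 - c / N)) + c / (N - c))
      (c / (N * (N - c)) - c / (N - c) ^ 2) N := by
  have hN0 : 0 < N := hc0.trans hN
  have hσ : 0 < 1 - σ := by linarith
  have h1 : 0 < 1 - c / N := by
    have : c / N < 1 := (div_lt_one hN0).mpr hN
    linarith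
  have hNc : (0:ℝ) < N - c := sub_pos.mpr hN
  have hu : HasDerivAt (fun x : ℝ => (1 - σ) * (1 - c / x)) ((1 - σ) * (c / N ^ 2)) N := by
    have hinv : HasDerivAt (fun x : ℝ => c / x) (c * -(N ^ 2)⁻¹) N :=
      (hasDerivAt_inv hN0.ne').const_mul c
    have := (hinv.const_sub 1).const_mul (1 - σ)
    convert this using 1
    all_goals try rfl
    field_simp
  have hupos : 0 < (1 - σ) * (1 - c / N) := mul_pos hσ h1
  have hlog : HasDerivAt (fun x : ℝ => Real.log ((1 - σ) * (1 - c / x)))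
      ((1 - σ) * (c / N ^ 2) / ((1 - σ) * (1 - c / N))) N := hu.log hupos.ne'
  have hdiv : HasDerivAt (fun x : ℝ => c / (x - c)) (c * -(1 / (N - c) ^ 2)) N := by
    have := (((hasDerivAt_id N).sub_const c).inv hNc.ne').const_mul c
    convert this using 1
    all_goals try rfl
    simp only [id_eq]
    field_simp
  have := hlog.add hdiv
  convert this using 1
  all_goals try rfl
  field_simp
  ring

lemma aux_G_anti (σ c : ℝ) (hσ1 : σ < 1) (hc0 : 0 < c) :
    StrictAntiOn (fun N : ℝ => Real.log ((1 - σ) * (1 - c / N)) + c / (N - c)) (Set.Ioi c) := by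
  apply strictAntiOn_of_deriv_neg (convex_Ioi c)
  · exact fun x hx => (aux_hasDerivAt_G σ c x hσ1 hc0 hx).differentiableAt.continuousAt.continuousWithinAt
  · intro x hx
    rw [interior_Ioi] at hx
    rw [(aux_hasDerivAt_G σ c x hσ1 hc0 hx).deriv]
    have hx0 : 0 < x := hc0.trans hx
    have hxc : (0:ℝ) < x - c := sub_pos.mpr hx
    have h1 : (x - c) ^ 2 < x * (x - c) := by nlinarith
    have := div_lt_div_of_pos_left hc0 (by positivity) h1
    linarith

lemma aux_log_add_div_tendsto (c : ℝ) (hc : 0 < c) :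
    Tendsto (fun t : ℝ => Real.log t + c / t) (𝓝[>] (0:ℝ)) atTop := by
  have h0 : Tendsto (fun t : ℝ => Real.log t * t) (𝓝[>] (0:ℝ)) (𝓝 0) := by
    simpa using tendsto_log_mul_rpow_nhdsGT_zero zero_lt_one
  have hev : ∀ᶠ t in 𝓝[>] (0:ℝ), c / 2 / t ≤ Real.log t + c / t := by
    filter_upwards [h0.eventually (lt_mem_nhds (show -(c/2) < 0 by linarith)),
      self_mem_nhdsWithin] with t h1 h2
    have h2 : (0:ℝ) < t := h2
    rw [div_le_iff₀ h2]
    have hexp : (Real.log t + c / t) * t = Real.log t * t + c := by field_simp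
    rw [hexp]
    linarith
  have hbig : Tendsto (fun t : ℝ => c / 2 / t) (𝓝[>] (0:ℝ)) atTop := by
    simpa [div_eq_mul_inv] using tendsto_inv_nhdsGT_zero.const_mul_atTop (show (0:ℝ) < c/2 by linarith)
  exact tendsto_atTop_mono' _ hev hbig




/-- Lemma 2, real-world CoT part: The real-world CoT
log-accuracy `F_Φ N = L N + ∫_1^N ln (Φ x) dx` attains its maximum over
`(c, ∞)` at a unique point `N_Φ* ∈ (c, ∞)`, and `N_Φ*` is the unique solution
in `(c, ∞)` of the optimality condition `g N = -ln (Φ N)`. -/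
theorem stmt_8 (σ T M c : ℝ)
    (hσ0 : 0 < σ) (hσ1 : σ < 1) (hT : 0 < T) (hM : 0 < M)
    (hc : c = T / M)
    (L g : ℝ → ℝ)
    (hL : ∀ N : ℝ, L N = N * Real.log ((1 - σ) * (1 - c / N)))
    (hg : ∀ N : ℝ, g N = deriv L N)
    (Φ : ℝ → ℝ)
    (hΦcont : ContinuousOn Φ (Set.Ici 0))
    (hΦpos : ∀ x : ℝ, 0 ≤ x → 0 < Φ x)
    (hΦle : ∀ x : ℝ, 0 ≤ x → Φ x ≤ 1)
    (hΦ0 : Φ 0 = 1)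
    (hΦanti : StrictAntiOn Φ (Set.Ici 0))
    (hΦlim : Filter.Tendsto Φ Filter.atTop (nhds 0))
    (F : ℝ → ℝ)
    (hF : ∀ N : ℝ, F N = L N + ∫ x in (1:ℝ)..N, Real.log (Φ x)) :
    ∃ Nstar : ℝ, Nstar ∈ Set.Ioi c ∧
      IsMaxOn F (Set.Ioi c) Nstar ∧
      (∀ N : ℝ, N ∈ Set.Ioi c → IsMaxOn F (Set.Ioi c) N → N = Nstar) ∧
      (∀ N : ℝ, N ∈ Set.Ioi c → (g N = -Real.log (Φ N) ↔ N = Nstar)) := by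
  have hc0 : 0 < c := hc ▸ div_pos hT hM
  have hσ : 0 < 1 - σ := by linarith
  set G : ℝ → ℝ := fun N => Real.log ((1 - σ) * (1 - c / N)) + c / (N - c) with hGdef
  set ψ : ℝ → ℝ := fun x => Real.log (Φ x) with hψdef
  set φ : ℝ → ℝ := fun N => G N + ψ N with hφdef
  have hLfun : L = fun N => N * Real.log ((1 - σ) * (1 - c / N)) := funext hL
  have hLd : ∀ N ∈ Set.Ioi c, HasDerivAt L (G N) N := by
    intro N hN
    rw [hLfun]
    exact aux_hasDerivAt_L σ c N hσ1 hc0 hN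
  have hgG : ∀ N ∈ Set.Ioi c, g N = G N := fun N hN => by rw [hg, (hLd N hN).deriv]
  have hGanti : StrictAntiOn G (Set.Ioi c) := aux_G_anti σ c hσ1 hc0
  have hΦat : ∀ x : ℝ, 0 < x → ContinuousAt Φ x := fun x hx =>
    hΦcont.continuousAt (Ici_mem_nhds hx)
  have hψat : ∀ x : ℝ, 0 < x → ContinuousAt ψ x := fun x hx =>
    (Real.continuousAt_log (hΦpos x hx.le).ne').comp (hΦat x hx)
  have hψcont : ContinuousOn ψ (Set.Ioi 0) := fun x hx => (hψat x hx).continuousWithinAt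
  have hψanti : StrictAntiOn ψ (Set.Ioi c) := by
    intro a ha b hb hab
    have ha0 : (0:ℝ) ≤ a := (hc0.trans ha).le
    have hb0 : (0:ℝ) ≤ b := (hc0.trans hb).le
    exact Real.log_lt_log (hΦpos b hb0) (hΦanti ha0 hb0 hab)
  have hφanti : StrictAntiOn φ (Set.Ioi c) := fun a ha b hb hab =>
    add_lt_add (hGanti ha hb hab) (hψanti ha hb hab)
  have hGcont : ContinuousOn G (Set.Ioi c) := fun x hx =>
    (aux_hasDerivAt_G σ c x hσ1 hc0 hx).differentiableAt.continuousAt.continuousWithinAt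
  have hφcont : ContinuousOn φ (Set.Ioi c) :=
    hGcont.add (hψcont.mono fun x hx => hc0.trans hx)
  -- derivative of F
  have hFd : ∀ N ∈ Set.Ioi c, HasDerivAt F (φ N) N := by
    intro N hN
    have hN0 : 0 < N := hc0.trans hN
    have hmin : (0:ℝ) < min 1 N := lt_min one_pos hN0
    have hII : IntervalIntegrable ψ MeasureTheory.volume 1 N := by
      apply ContinuousOn.intervalIntegrable
      intro x hx
      exact (hψat x (lt_of_lt_of_le hmin hx.1)).continuousWithinAt
    have hmeas : StronglyMeasurableAtFilter ψ (nhds N) MeasureTheory.volume :=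
      hψcont.stronglyMeasurableAtFilter isOpen_Ioi N hN0
    have hI : HasDerivAt (fun u => ∫ x in (1:ℝ)..u, ψ x) (ψ N) N :=
      intervalIntegral.integral_hasDerivAt_right hII hmeas (hψat N hN0)
    have hFfun : F = fun N => L N + ∫ x in (1:ℝ)..N, ψ x := funext hF
    rw [hFfun]
    exact (hLd N hN).add hI
  -- φ tends to atTop as N → c⁺
  have hmaps : Tendsto (fun N : ℝ => N - c) (nhdsWithin c (Set.Ioi c)) (nhdsWithin 0 (Set.Ioi 0)) := by
    apply tendsto_nhdsWithin_of_tendsto_nhds_of_eventually_within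
    · have h1 : Tendsto (fun N : ℝ => N - c) (nhds c) (nhds (c - c)) :=
        (continuous_id.sub continuous_const).tendsto c
      simpa using h1.mono_left nhdsWithin_le_nhds
    · filter_upwards [self_mem_nhdsWithin] with x hx
      exact sub_pos.mpr (Set.mem_Ioi.mp hx)
  have hlim1 : Tendsto (fun N : ℝ => Real.log (N - c) + c / (N - c))
      (nhdsWithin c (Set.Ioi c)) atTop := (aux_log_add_div_tendsto c hc0).comp hmaps
  have hrest : ContinuousAt (fun N : ℝ => Real.log (1 - σ) - Real.log N + ψ N) c :=
    (continuousAt_const.sub (Real.continuousAt_log hc0.ne')).add (hψat c hc0)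
  have hsum : Tendsto (fun N : ℝ => (Real.log (N - c) + c / (N - c)) +
      (Real.log (1 - σ) - Real.log N + ψ N)) (nhdsWithin c (Set.Ioi c)) atTop := by
    apply tendsto_atTop_add_right_of_le' _ (Real.log (1 - σ) - Real.log c + ψ c - 1) hlim1
    exact (hrest.tendsto.mono_left nhdsWithin_le_nhds).eventually
      (eventually_ge_nhds (sub_one_lt _))
  have hφeq : ∀ N : ℝ, c < N → φ N = (Real.log (N - c) + c / (N - c)) +
      (Real.log (1 - σ) - Real.log N + ψ N) := by
    intro N hN
    have hN0 : 0 < N := hc0.trans hN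
    have hNc : (0:ℝ) < N - c := sub_pos.mpr hN
    have h1 : (1 : ℝ) - c / N = (N - c) / N := by field_simp
    simp only [hφdef, hGdef]
    rw [h1, Real.log_mul hσ.ne' (by positivity), Real.log_div hNc.ne' hN0.ne']
    ring
  have hφtop : Tendsto φ (nhdsWithin c (Set.Ioi c)) atTop := by
    apply hsum.congr'
    filter_upwards [self_mem_nhdsWithin] with N hN
    exact (hφeq N hN).symm
  obtain ⟨a, h0a, hac⟩ :=
    ((hφtop.eventually (eventually_gt_atTop (0:ℝ))).and self_mem_nhdsWithin).exists
  have hac : c < a := hac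
  -- a point b with φ b < 0
  have hGb : ∀ N : ℝ, 2 * c + 1 ≤ N → G N ≤ Real.log (1 - σ) + 1 := by
    intro N hN'
    have hN : c < N := by linarith
    have hN0 : 0 < N := hc0.trans hN
    have h1 : 0 < 1 - c / N := by
      have : c / N < 1 := (div_lt_one hN0).mpr hN
      linarith
    have hle : Real.log ((1 - σ) * (1 - c / N)) ≤ Real.log (1 - σ) := by
      rw [Real.log_mul hσ.ne' h1.ne']
      have h2 : Real.log (1 - c / N) ≤ 0 := by
        apply Real.log_nonpos h1.le
        have : 0 ≤ c / N := by positivity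
        linarith
      linarith
    have hd : c / (N - c) ≤ 1 := by
      rw [div_le_one (by linarith)]
      linarith
    simp only [hGdef]
    linarith
  obtain ⟨b, hb1, hb2, hb3⟩ :=
    ((hΦlim.eventually (gt_mem_nhds (Real.exp_pos (-(Real.log (1 - σ) + 2))))).and
      ((eventually_ge_atTop (2 * c + 1)).and (eventually_gt_atTop a))).exists
  have hbc : c < b := by linarith
  have hφb : φ b < 0 := by
    have hψb : ψ b < -(Real.log (1 - σ) + 2) := by
      have h := Real.log_lt_log (hΦpos b (by linarith)) hb1
      rwa [Real.log_exp] at h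
    have hGB := hGb b hb2
    simp only [hφdef]
    linarith
  -- IVT to get Nstar
  have hsub : Set.Icc a b ⊆ Set.Ioi c := fun x hx => lt_of_lt_of_le hac hx.1
  obtain ⟨Nstar, hNab, hφN⟩ :=
    intermediate_value_Ioo' hb3.le (hφcont.mono hsub) ⟨hφb, h0a⟩
  have hNs : Nstar ∈ Set.Ioi c := lt_trans hac hNab.1
  -- monotonicity of F
  have hFmono : StrictMonoOn F (Set.Ioc c Nstar) := by
    apply strictMonoOn_of_deriv_pos (convex_Ioc c Nstar)
    · intro x hx
      exact (hFd x hx.1).differentiableAt.continuousAt.continuousWithinAt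
    · intro x hx
      rw [interior_Ioc] at hx
      rw [(hFd x hx.1).deriv]
      have h := hφanti hx.1 hNs hx.2
      rw [hφN] at h
      exact h
  have hFanti : StrictAntiOn F (Set.Ici Nstar) := by
    apply strictAntiOn_of_deriv_neg (convex_Ici Nstar)
    · intro x hx
      exact (hFd x (show c < x from lt_of_lt_of_le hNs hx)).differentiableAt.continuousAt.continuousWithinAt
    · intro x hx
      rw [interior_Ici] at hx
      rw [(hFd x (show c < x from lt_trans hNs hx)).deriv]
      have h := hφanti hNs (show c < x from lt_trans hNs hx) hx
      rw [hφN] at h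
      exact h
  have hlt : ∀ y ∈ Set.Ioi c, y ≠ Nstar → F y < F Nstar := by
    intro y hy hne
    rcases lt_or_gt_of_ne hne with h | h
    · exact hFmono ⟨hy, h.le⟩ ⟨hNs, le_refl _⟩ h
    · exact hFanti Set.self_mem_Ici h.le h
  have hmax : IsMaxOn F (Set.Ioi c) Nstar := by
    apply isMaxOn_iff.mpr
    intro y hy
    by_cases hne : y = Nstar
    · exact hne ▸ le_refl _
    · exact (hlt y hy hne).le
  refine ⟨Nstar, hNs, hmax, ?_, ?_⟩
  · intro N hN hmaxN
    by_contra hne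
    have h1 : F N < F Nstar := hlt N hN hne
    have h2 : F Nstar ≤ F N := isMaxOn_iff.mp hmaxN Nstar hNs
    linarith
  · intro N hN
    constructor
    · intro hgN
      have hφ0 : φ N = 0 := by
        simp only [hφdef, hψdef]
        rw [← hgG N hN, hgN]
        ring
      exact hφanti.injOn hN hNs (hφ0.trans hφN.symm)
    · intro h
      subst h
      have h0 : G N + ψ N = 0 := hφN
      rw [hgG N hN]
      simp only [hψdef] at h0
      linarith
end

section
/- (Lemma 2, InsightReplay part.) For any fixed replay distance d₀ ≥ 0, the InsightReplay log-accuracy F_IR(N) := L(N) + N · ln Φ(d₀) attains its maximum over (c, ∞) at a unique point N_IR* ∈ (c, ∞), and N_IR* is characterized as the unique solution in (c, ∞) of the optimality condition g(N) = −ln Φ(d₀). -/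
open Real Filter Set Topology

/-- Lemma 2, InsightReplay part: For any fixed replay distance
`d₀ ≥ 0`, the InsightReplay log-accuracy `F_IR N = L N + N * ln (Φ d₀)` attains
its maximum over `(c, ∞)` at a unique point `N_IR* ∈ (c, ∞)`, and `N_IR*` is
the unique solution in `(c, ∞)` of the optimality condition
`g N = -ln (Φ d₀)`. -/
theorem stmt_9 (σ T M c : ℝ)
    (hσ0 : 0 < σ) (hσ1 : σ < 1) (hT : 0 < T) (hM : 0 < M)
    (hc : c = T / M)
    (L g : ℝ → ℝ)
    (hL : ∀ N : ℝ, L N = N * Real.log ((1 - σ) * (1 - c / N)))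
    (hg : ∀ N : ℝ, g N = deriv L N)
    (Φ : ℝ → ℝ)
    (hΦcont : ContinuousOn Φ (Set.Ici 0))
    (hΦpos : ∀ x : ℝ, 0 ≤ x → 0 < Φ x)
    (hΦle : ∀ x : ℝ, 0 ≤ x → Φ x ≤ 1)
    (hΦ0 : Φ 0 = 1)
    (hΦanti : StrictAntiOn Φ (Set.Ici 0))
    (hΦlim : Filter.Tendsto Φ Filter.atTop (nhds 0))
    (d₀ : ℝ) (hd₀ : 0 ≤ d₀)
    (FIR : ℝ → ℝ)
    (hFIR : ∀ N : ℝ, FIR N = L N + N * Real.log (Φ d₀)) :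
    ∃ Nstar : ℝ, Nstar ∈ Set.Ioi c ∧
      IsMaxOn FIR (Set.Ioi c) Nstar ∧
      (∀ N : ℝ, N ∈ Set.Ioi c → IsMaxOn FIR (Set.Ioi c) N → N = Nstar) ∧
      (∀ N : ℝ, N ∈ Set.Ioi c → (g N = -Real.log (Φ d₀) ↔ N = Nstar)) := by
  have hc0 : 0 < c := by rw [hc]; positivity
  have hΦd : 0 < Φ d₀ := hΦpos d₀ hd₀
  have hΦd1 : Φ d₀ ≤ 1 := hΦle d₀ hd₀
  have hσ' : (0:ℝ) < 1 - σ := by linarith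
  set a : ℝ := Real.log (1 - σ) + Real.log (Φ d₀) with ha_def
  have ha : a < 0 := by
    have h1 : Real.log (1 - σ) < 0 := Real.log_neg hσ' (by linarith)
    have h2 : Real.log (Φ d₀) ≤ 0 := Real.log_nonpos hΦd.le hΦd1
    simp only [ha_def]; linarith
  set h : ℝ → ℝ := fun x => Real.log (x - c) - Real.log x + c * (x - c)⁻¹ with hh_def
  -- rewriting of the logarithm on Ioi c
  have hlog : ∀ x : ℝ, x ∈ Ioi c →
      Real.log ((1 - σ) * (1 - c / x)) = Real.log (1 - σ) + (Real.log (x - c) - Real.log x) := by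
    intro x hx
    have h1 : (0:ℝ) < x := lt_trans hc0 hx
    have h2 : (0:ℝ) < x - c := sub_pos.mpr hx
    have h3 : (0:ℝ) < 1 - c / x := by rw [sub_pos, div_lt_one h1]; exact hx
    rw [Real.log_mul (ne_of_gt hσ') (ne_of_gt h3)]
    have h4 : (1 : ℝ) - c / x = (x - c) / x := by field_simp
    rw [h4, Real.log_div (ne_of_gt h2) (ne_of_gt h1)]
  have hFeq : ∀ x ∈ Ioi c, FIR x = x * (a + (Real.log (x - c) - Real.log x)) := by
    intro x hx
    rw [hFIR, hL, hlog x hx, ha_def]; ring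
  have hLeq : ∀ x ∈ Ioi c,
      L x = x * (Real.log (1 - σ) + (Real.log (x - c) - Real.log x)) := by
    intro x hx
    rw [hL, hlog x hx]
  -- derivative of the core functions
  have hcore : ∀ b : ℝ, ∀ N ∈ Ioi c,
      HasDerivAt (fun x => x * (b + (Real.log (x - c) - Real.log x))) (b + h N) N := by
    intro b N hN
    have h1 : (0:ℝ) < N := lt_trans hc0 hN
    have h2 : (0:ℝ) < N - c := sub_pos.mpr hN
    have d1 : HasDerivAt (fun x : ℝ => x - c) 1 N := (hasDerivAt_id N).sub_const c
    have d2 : HasDerivAt (fun x : ℝ => Real.log (x - c)) (1 / (N - c)) N :=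
      d1.log (ne_of_gt h2)
    have d3 : HasDerivAt Real.log N⁻¹ N := Real.hasDerivAt_log (ne_of_gt h1)
    have d4 : HasDerivAt (fun x : ℝ => b + (Real.log (x - c) - Real.log x))
        (1 / (N - c) - N⁻¹) N := (d2.sub d3).const_add b
    have d5 : HasDerivAt (fun x : ℝ => x * (b + (Real.log (x - c) - Real.log x)))
        (1 * (b + (Real.log (N - c) - Real.log N)) + id N * (1 / (N - c) - N⁻¹)) N :=
      (hasDerivAt_id N).mul d4
    convert d5 using 1
    simp only [hh_def, id_eq, one_mul]
    field_simp
    ring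
  have hFd : ∀ N ∈ Ioi c, HasDerivAt FIR (a + h N) N := by
    intro N hN
    refine (hcore a N hN).congr_of_eventuallyEq ?_
    exact Filter.eventuallyEq_of_mem (isOpen_Ioi.mem_nhds hN) (fun x hx => hFeq x hx)
  have hLd : ∀ N ∈ Ioi c, HasDerivAt L (Real.log (1 - σ) + h N) N := by
    intro N hN
    refine (hcore (Real.log (1 - σ)) N hN).congr_of_eventuallyEq ?_
    exact Filter.eventuallyEq_of_mem (isOpen_Ioi.mem_nhds hN) (fun x hx => hLeq x hx)
  have hgval : ∀ N ∈ Ioi c, g N = Real.log (1 - σ) + h N := by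
    intro N hN
    rw [hg]; exact (hLd N hN).deriv
  -- derivative of h and strict antitonicity
  have hhd : ∀ N ∈ Ioi c,
      HasDerivAt h (1 / (N - c) - N⁻¹ + c * (-1 / (N - c) ^ 2)) N := by
    intro N hN
    have h1 : (0:ℝ) < N := lt_trans hc0 hN
    have h2 : (0:ℝ) < N - c := sub_pos.mpr hN
    have d1 : HasDerivAt (fun x : ℝ => x - c) 1 N := (hasDerivAt_id N).sub_const c
    have d2 : HasDerivAt (fun x : ℝ => Real.log (x - c)) (1 / (N - c)) N :=
      d1.log (ne_of_gt h2)
    have d3 : HasDerivAt Real.log N⁻¹ N := Real.hasDerivAt_log (ne_of_gt h1)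
    have d6 : HasDerivAt (fun x : ℝ => c * (x - c)⁻¹) (c * (-1 / (N - c) ^ 2)) N :=
      (d1.inv (ne_of_gt h2)).const_mul c
    exact (d2.sub d3).add d6
  have hanti_h : StrictAntiOn h (Ioi c) := by
    apply strictAntiOn_of_deriv_neg (convex_Ioi c)
    · intro x hx
      exact (hhd x hx).differentiableAt.continuousAt.continuousWithinAt
    · intro x hx
      rw [interior_Ioi] at hx
      rw [(hhd x hx).deriv]
      have h1 : (0:ℝ) < x := lt_trans hc0 hx
      have h2 : (0:ℝ) < x - c := sub_pos.mpr hx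
      have heq : 1 / (x - c) - x⁻¹ + c * (-1 / (x - c) ^ 2)
          = -(c ^ 2) / (x * (x - c) ^ 2) := by field_simp; ring
      rw [heq]
      apply div_neg_of_neg_of_pos
      · nlinarith
      · positivity
  -- h tends to ∞ at c⁺
  have htopc : Tendsto h (𝓝[>] c) atTop := by
    have l1 : Tendsto (fun t : ℝ => t * Real.log t + c) (𝓝[>] (0:ℝ)) (𝓝 c) := by
      have h0 : Tendsto (fun t : ℝ => t * Real.log t) (𝓝[>] (0:ℝ)) (𝓝 0) := by
        have := (Real.continuous_mul_log.tendsto 0).mono_left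
          (nhdsWithin_le_nhds (s := Ioi (0:ℝ)))
        simpa using this
      simpa using h0.add tendsto_const_nhds
    have l2 : Tendsto (fun t : ℝ => (t * Real.log t + c) * t⁻¹) (𝓝[>] (0:ℝ)) atTop :=
      Filter.Tendsto.pos_mul_atTop hc0 l1 tendsto_inv_nhdsGT_zero
    have l3 : Tendsto (fun t : ℝ => Real.log t + c / t) (𝓝[>] (0:ℝ)) atTop := by
      refine l2.congr' ?_
      filter_upwards [self_mem_nhdsWithin] with t ht
      have ht' : t ≠ 0 := ne_of_gt ht
      field_simp
    have l4 : Tendsto (fun x : ℝ => x - c) (𝓝[>] c) (𝓝[>] (0:ℝ)) := by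
      apply tendsto_nhdsWithin_of_tendsto_nhds_of_eventually_within
      · have : Tendsto (fun x : ℝ => x - c) (𝓝 c) (𝓝 (c - c)) :=
          (continuous_id.sub continuous_const).tendsto c
        simpa using this.mono_left nhdsWithin_le_nhds
      · filter_upwards [self_mem_nhdsWithin] with x hx
        exact sub_pos.mpr (mem_Ioi.mp hx)
    have l5 : Tendsto (fun x : ℝ => Real.log (x - c) + c / (x - c)) (𝓝[>] c) atTop :=
      l3.comp l4
    have l6 : Tendsto (fun x : ℝ => -Real.log x) (𝓝[>] c) (𝓝 (-Real.log c)) := by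
      exact (((Real.continuousAt_log (ne_of_gt hc0)).tendsto).mono_left
        nhdsWithin_le_nhds).neg
    have := l5.atTop_add l6
    refine this.congr (fun x => ?_)
    simp only [hh_def]; ring
  -- h tends to 0 at ∞
  have htopinf : Tendsto h atTop (𝓝 (0:ℝ)) := by
    have t1 : Tendsto (fun x : ℝ => Real.log (x - c) - Real.log x) atTop (𝓝 0) := by
      have := Real.tendsto_log_comp_add_sub_log (-c)
      simpa [sub_eq_add_neg] using this
    have t2 : Tendsto (fun x : ℝ => c * (x - c)⁻¹) atTop (𝓝 0) := by
      have := Tendsto.div_atTop (tendsto_const_nhds (x := c))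
        (tendsto_atTop_add_const_right _ (-c) tendsto_id)
      simpa [div_eq_mul_inv, sub_eq_add_neg] using this
    have := t1.add t2
    simpa [hh_def] using this
  -- find bracketing points
  obtain ⟨N₁, hN₁h, hN₁c⟩ : ∃ x, -a < h x ∧ x ∈ Ioi c :=
    ((htopc.eventually_gt_atTop (-a)).and eventually_mem_nhdsWithin).exists
  obtain ⟨N₂, hN₂h, hN₂gt⟩ : ∃ x, h x < -a ∧ N₁ < x := by
    have e1 : ∀ᶠ x in atTop, h x < -a :=
      htopinf.eventually_lt_const (by linarith : (0:ℝ) < -a)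
    exact (e1.and (eventually_gt_atTop N₁)).exists
  have hN₁N₂ : N₁ ≤ N₂ := le_of_lt hN₂gt
  have hsub : Icc N₁ N₂ ⊆ Ioi c := fun x hx => lt_of_lt_of_le hN₁c hx.1
  have hconth : ContinuousOn h (Icc N₁ N₂) := fun x hx =>
    ((hhd x (hsub hx)).differentiableAt.continuousAt).continuousWithinAt
  obtain ⟨Nstar, hNsmem, hNs⟩ :=
    intermediate_value_Icc' hN₁N₂ hconth ⟨le_of_lt hN₂h, le_of_lt hN₁h⟩
  have hNsc : Nstar ∈ Ioi c := hsub hNsmem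
  -- sign of the derivative of FIR
  have hpos : ∀ x ∈ Ioi c, x < Nstar → 0 < a + h x := by
    intro x hx hlt
    have := hanti_h hx hNsc hlt
    rw [hNs] at this; linarith
  have hneg : ∀ x ∈ Ioi c, Nstar < x → a + h x < 0 := by
    intro x hx hlt
    have := hanti_h hNsc hx hlt
    rw [hNs] at this; linarith
  -- monotonicity of FIR
  have hmono : StrictMonoOn FIR (Ioc c Nstar) := by
    apply strictMonoOn_of_deriv_pos (convex_Ioc c Nstar)
    · intro x hx
      exact (hFd x hx.1).differentiableAt.continuousAt.continuousWithinAt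
    · intro x hx
      rw [interior_Ioc] at hx
      rw [(hFd x hx.1).deriv]
      exact hpos x hx.1 hx.2
  have hantiF : StrictAntiOn FIR (Ici Nstar) := by
    apply strictAntiOn_of_deriv_neg (convex_Ici Nstar)
    · intro x hx
      exact (hFd x (mem_Ioi.mpr (lt_of_lt_of_le (mem_Ioi.mp hNsc) hx))).differentiableAt.continuousAt.continuousWithinAt
    · intro x hx
      rw [interior_Ici] at hx
      rw [(hFd x (mem_Ioi.mpr (lt_trans (mem_Ioi.mp hNsc) hx))).deriv]
      exact hneg x (mem_Ioi.mpr (lt_trans (mem_Ioi.mp hNsc) hx)) hx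
  have hmax : IsMaxOn FIR (Ioi c) Nstar := by
    intro x hx
    simp only [Set.mem_setOf_eq]
    rcases lt_trichotomy x Nstar with hlt | heq | hgt
    · exact le_of_lt (hmono ⟨hx, hlt.le⟩ ⟨hNsc, le_refl _⟩ hlt)
    · rw [heq]
    · exact le_of_lt (hantiF self_mem_Ici (le_of_lt hgt) hgt)
  refine ⟨Nstar, hNsc, hmax, ?_, ?_⟩
  · intro N hN hNmax
    by_contra hne
    have h1 : FIR Nstar ≤ FIR N := hNmax hNsc
    rcases lt_or_gt_of_ne hne with hlt | hgt
    · have := hmono ⟨hN, hlt.le⟩ ⟨hNsc, le_refl _⟩ hlt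
      linarith
    · have := hantiF self_mem_Ici (le_of_lt hgt) hgt
      linarith
  · intro N hN
    constructor
    · intro hgN
      have h1 : g N = Real.log (1 - σ) + h N := hgval N hN
      have h2 : h N = -a := by
        rw [h1] at hgN
        simp only [ha_def]
        linarith
      exact hanti_h.injOn hN hNsc (h2.trans hNs.symm)
    · intro hNe
      subst hNe
      rw [hgval N hNsc, hNs]
      simp only [ha_def]
      ring
end

section
/- (Theorem 1: InsightReplay shifts the optimal length rightward.) Let N_Φ* ∈ (c, ∞) be the unique maximizer of F_Φ and let N_IR* ∈ (c, ∞) be the unique maximizer of F_IR for a replay distance d₀ ≥ 0. If Φ(d₀) > Φ(N_Φ*) — in particular, whenever 0 ≤ d₀ < N_Φ* — then N_IR* > N_Φ*. -/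
/-- Theorem 1: InsightReplay shifts the optimal length
rightward: Let `N_Φ* ∈ (c, ∞)` be the unique maximizer of
`F_Φ N = L N + ∫_1^N ln (Φ x) dx` over `(c, ∞)` and `N_IR* ∈ (c, ∞)` the
unique maximizer of `F_IR N = L N + N * ln (Φ d₀)` over `(c, ∞)`, for a replay
distance `d₀ ≥ 0`. If `Φ d₀ > Φ N_Φ*` (in particular whenever
`0 ≤ d₀ < N_Φ*`), then `N_IR* > N_Φ*`. -/
theorem stmt_10 (σ T M c : ℝ)
    (hσ0 : 0 < σ) (hσ1 : σ < 1) (hT : 0 < T) (hM : 0 < M)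
    (hc : c = T / M)
    (L : ℝ → ℝ)
    (hL : ∀ N : ℝ, L N = N * Real.log ((1 - σ) * (1 - c / N)))
    (Φ : ℝ → ℝ)
    (hΦcont : ContinuousOn Φ (Set.Ici 0))
    (hΦpos : ∀ x : ℝ, 0 ≤ x → 0 < Φ x)
    (hΦle : ∀ x : ℝ, 0 ≤ x → Φ x ≤ 1)
    (hΦ0 : Φ 0 = 1)
    (hΦanti : StrictAntiOn Φ (Set.Ici 0))
    (hΦlim : Filter.Tendsto Φ Filter.atTop (nhds 0))
    (d₀ : ℝ) (hd₀ : 0 ≤ d₀)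
    (FΦ FIR : ℝ → ℝ)
    (hFΦ : ∀ N : ℝ, FΦ N = L N + ∫ x in (1:ℝ)..N, Real.log (Φ x))
    (hFIR : ∀ N : ℝ, FIR N = L N + N * Real.log (Φ d₀))
    (NΦ NIR : ℝ)
    (hNΦmem : NΦ ∈ Set.Ioi c)
    (hNΦmax : IsMaxOn FΦ (Set.Ioi c) NΦ)
    (hNΦuniq : ∀ N : ℝ, N ∈ Set.Ioi c → IsMaxOn FΦ (Set.Ioi c) N → N = NΦ)
    (hNIRmem : NIR ∈ Set.Ioi c)
    (hNIRmax : IsMaxOn FIR (Set.Ioi c) NIR)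
    (hNIRuniq : ∀ N : ℝ, N ∈ Set.Ioi c → IsMaxOn FIR (Set.Ioi c) N → N = NIR)
    (hdom : Φ d₀ > Φ NΦ) :
    NIR > NΦ := by
  have hc0 : 0 < c := by rw [hc]; positivity
  have hσ' : (0:ℝ) < 1 - σ := by linarith
  have hNΦc : c < NΦ := hNΦmem
  have hNΦ0 : 0 < NΦ := lt_trans hc0 hNΦc
  -- first derivative of L
  set gL : ℝ → ℝ := fun x =>
    Real.log (1 - σ) + Real.log (x - c) + x / (x - c) - Real.log x - 1 with hgL
  have hLd : ∀ x ∈ Set.Ioi c, HasDerivAt L (gL x) x := by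
    intro x hx
    have hxc : (0:ℝ) < x - c := sub_pos.mpr hx
    have hx0 : (0:ℝ) < x := lt_trans hc0 hx
    have hE : HasDerivAt
        (fun y => y * Real.log (1 - σ) + y * Real.log (y - c) - y * Real.log y)
        (gL x) x := by
      have h1 : HasDerivAt (fun y : ℝ => y * Real.log (1 - σ)) (Real.log (1 - σ)) x := by
        simpa using (hasDerivAt_id x).mul_const (Real.log (1 - σ))
      have h2 : HasDerivAt (fun y : ℝ => y * Real.log (y - c))
          (Real.log (x - c) + x / (x - c)) x := by
        have hsub : HasDerivAt (fun y : ℝ => y - c) 1 x := (hasDerivAt_id x).sub_const c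
        have hlog : HasDerivAt (fun y : ℝ => Real.log (y - c)) (1 / (x - c)) x :=
          hsub.log (ne_of_gt hxc)
        have := (hasDerivAt_id x).mul hlog
        refine this.congr_deriv ?_
        simp only [id_eq]; ring
      have h3 : HasDerivAt (fun y : ℝ => y * Real.log y) (Real.log x + 1) x := by
        have := (hasDerivAt_id x).mul (Real.hasDerivAt_log (ne_of_gt hx0))
        refine this.congr_deriv ?_
        rw [id_eq, mul_inv_cancel₀ (ne_of_gt hx0)]; ring
      have := (h1.add h2).sub h3
      refine this.congr_deriv ?_
      simp only [hgL]; ring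
    refine hE.congr_of_eventuallyEq ?_
    have hmem : Set.Ioi c ∈ nhds x := isOpen_Ioi.mem_nhds hx
    filter_upwards [hmem] with y hy
    have hyc : (0:ℝ) < y - c := sub_pos.mpr hy
    have hy0 : (0:ℝ) < y := lt_trans hc0 hy
    rw [hL y]
    have h1 : 1 - c / y = (y - c) / y := by field_simp
    rw [h1, Real.log_mul (ne_of_gt hσ') (ne_of_gt (div_pos hyc hy0)),
      Real.log_div (ne_of_gt hyc) (ne_of_gt hy0)]
    ring
  -- second derivative bound
  have hgLd : ∀ x ∈ Set.Ioi c, HasDerivAt gL (-(c ^ 2 / (x * (x - c) ^ 2))) x := by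
    intro x hx
    have hxc : (0:ℝ) < x - c := sub_pos.mpr hx
    have hx0 : (0:ℝ) < x := lt_trans hc0 hx
    have hsub : HasDerivAt (fun y : ℝ => y - c) 1 x := (hasDerivAt_id x).sub_const c
    have hlog1 : HasDerivAt (fun y : ℝ => Real.log (y - c)) (1 / (x - c)) x :=
      hsub.log (ne_of_gt hxc)
    have hdiv : HasDerivAt (fun y : ℝ => y / (y - c))
        ((1 * (x - c) - x * 1) / (x - c) ^ 2) x :=
      (hasDerivAt_id x).div hsub (ne_of_gt hxc)
    have hlog2 : HasDerivAt Real.log (1 / x) x := by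
      simpa [one_div] using Real.hasDerivAt_log (ne_of_gt hx0)
    have h := ((((hasDerivAt_const x (Real.log (1 - σ))).add hlog1).add hdiv).sub
      hlog2).sub_const 1
    refine h.congr_deriv ?_
    have hxc' : (x - c) ≠ 0 := ne_of_gt hxc
    have hx0' : x ≠ 0 := ne_of_gt hx0
    field_simp
    ring
  -- FIR as an explicit function
  have hFIRfun : FIR = fun N => L N + N * Real.log (Φ d₀) := funext hFIR
  have hFIRd : ∀ x ∈ Set.Ioi c, HasDerivAt FIR (gL x + Real.log (Φ d₀)) x := by
    intro x hx
    rw [hFIRfun]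
    exact (hLd x hx).add (by simpa using (hasDerivAt_id x).mul_const (Real.log (Φ d₀)))
  -- concavity of FIR on (c, ∞)
  have hconc : ConcaveOn ℝ (Set.Ioi c) FIR := by
    refine concaveOn_of_hasDerivWithinAt2_nonpos (f' := fun x => gL x + Real.log (Φ d₀))
      (f'' := fun x => -(c ^ 2 / (x * (x - c) ^ 2))) (convex_Ioi c)
      (fun x hx => ((hFIRd x hx).differentiableAt.continuousAt).continuousWithinAt)
      ?_ ?_ ?_
    · intro x hx
      rw [interior_Ioi] at hx
      exact (hFIRd x hx).hasDerivWithinAt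
    · intro x hx
      rw [interior_Ioi] at hx
      exact (((hgLd x hx).add_const (Real.log (Φ d₀)))).hasDerivWithinAt
    · intro x hx
      rw [interior_Ioi] at hx
      have hxc : (0:ℝ) < x - c := sub_pos.mpr hx
      have hx0 : (0:ℝ) < x := lt_trans hc0 hx
      have : 0 < c ^ 2 / (x * (x - c) ^ 2) := by positivity
      linarith
  -- derivative of FΦ at NΦ
  have hlogcont : ContinuousOn (fun x => Real.log (Φ x)) (Set.Ioi 0) := by
    refine ContinuousOn.log (hΦcont.mono fun x hx => Set.mem_Ici.mpr (le_of_lt hx)) ?_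
    intro x hx
    exact ne_of_gt (hΦpos x (le_of_lt hx))
  have hIder : HasDerivAt (fun u => ∫ x in (1:ℝ)..u, Real.log (Φ x))
      (Real.log (Φ NΦ)) NΦ := by
    refine intervalIntegral.integral_hasDerivAt_right ?_ ?_ ?_
    · refine (hlogcont.mono ?_).intervalIntegrable
      intro x hx
      rcases Set.mem_uIcc.mp hx with ⟨h1, _⟩ | ⟨h1, _⟩
      · exact lt_of_lt_of_le one_pos h1
      · exact lt_of_lt_of_le hNΦ0 h1
    · exact hlogcont.stronglyMeasurableAtFilter isOpen_Ioi NΦ hNΦ0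
    · exact hlogcont.continuousAt (isOpen_Ioi.mem_nhds hNΦ0)
  have hFΦfun : FΦ = fun N => L N + ∫ x in (1:ℝ)..N, Real.log (Φ x) := funext hFΦ
  have hFΦd : HasDerivAt FΦ (gL NΦ + Real.log (Φ NΦ)) NΦ := by
    rw [hFΦfun]; exact (hLd NΦ hNΦmem).add hIder
  have hloc : IsLocalMax FΦ NΦ := hNΦmax.isLocalMax (isOpen_Ioi.mem_nhds hNΦmem)
  have hzero : gL NΦ + Real.log (Φ NΦ) = 0 := hloc.hasDerivAt_eq_zero hFΦd
  -- derivative of FIR at NΦ is positive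
  have hδpos : 0 < gL NΦ + Real.log (Φ d₀) := by
    have : Real.log (Φ NΦ) < Real.log (Φ d₀) :=
      Real.log_lt_log (hΦpos NΦ (le_of_lt hNΦ0)) hdom
    linarith
  have hFIRNΦ : HasDerivAt FIR (gL NΦ + Real.log (Φ d₀)) NΦ := hFIRd NΦ hNΦmem
  -- find N' > NΦ with FIR N' > FIR NΦ
  obtain ⟨N', hN'gt, hN'val⟩ : ∃ N', NΦ < N' ∧ FIR NΦ < FIR N' := by
    have hslope : Filter.Tendsto (slope FIR NΦ) (nhdsWithin NΦ {NΦ}ᶜ)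
        (nhds (gL NΦ + Real.log (Φ d₀))) := hasDerivAt_iff_tendsto_slope.mp hFIRNΦ
    have hslope' : Filter.Tendsto (slope FIR NΦ) (nhdsWithin NΦ (Set.Ioi NΦ))
        (nhds (gL NΦ + Real.log (Φ d₀))) :=
      hslope.mono_left (nhdsWithin_mono _ (fun x hx => ne_of_gt hx))
    have hev : ∀ᶠ x in nhdsWithin NΦ (Set.Ioi NΦ), 0 < slope FIR NΦ x :=
      hslope'.eventually_const_lt hδpos
    obtain ⟨x, hx1, hx2⟩ := (hev.and self_mem_nhdsWithin).exists
    refine ⟨x, hx2, ?_⟩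
    have hxne : x - NΦ > 0 := sub_pos.mpr hx2
    have : 0 < (FIR x - FIR NΦ) / (x - NΦ) := by
      simpa [slope_def_field, div_eq_mul_inv] using hx1
    nlinarith [this, mul_pos this hxne, div_mul_cancel₀ (FIR x - FIR NΦ) (ne_of_gt hxne)]
  have hN'mem : N' ∈ Set.Ioi c := lt_trans hNΦc hN'gt
  -- conclude
  by_contra hcon
  push_neg at hcon
  rcases eq_or_lt_of_le hcon with heq | hlt
  · have := hNIRmax hN'mem
    rw [heq] at this
    exact absurd hN'val (not_lt.mpr this)
  · -- NIR < NΦ < N'; use concavity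
    have hden : (0:ℝ) < N' - NIR := by linarith
    set a : ℝ := (N' - NΦ) / (N' - NIR) with ha
    set b : ℝ := (NΦ - NIR) / (N' - NIR) with hb
    have ha0 : 0 ≤ a := div_nonneg (by linarith) (le_of_lt hden)
    have hb0 : 0 ≤ b := div_nonneg (by linarith) (le_of_lt hden)
    have hab : a + b = 1 := by rw [ha, hb]; field_simp; ring
    have hcomb : a • NIR + b • N' = NΦ := by
      rw [ha, hb, smul_eq_mul, smul_eq_mul]; have hden' := ne_of_gt hden; field_simp; ring
    have h1 : a • FIR NIR + b • FIR N' ≤ FIR (a • NIR + b • N') :=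
      hconc.2 hNIRmem hN'mem ha0 hb0 hab
    rw [hcomb] at h1
    have h2 : FIR N' ≤ FIR NIR := hNIRmax hN'mem
    simp only [smul_eq_mul] at h1
    have h3 : a * FIR N' ≤ a * FIR NIR := mul_le_mul_of_nonneg_left h2 ha0
    have h4 : a * FIR N' + b * FIR N' = FIR N' := by rw [← add_mul, hab, one_mul]
    linarith
end
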